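/- Let h : ℝ³ → ℂ be continuous, L > 0, V > 0 and x ∈ ℝ³. Then ‖(h_x)_L − (h_x)_{L,V}‖₂ ≤ ‖h_L − h_{L,V}‖₂ + (√3·π/V)·‖x‖·‖h_{L,V}‖₂, where h_L(k) = h(k)·χ_{I_L}(k) and h_{L,V}(k) = h(q_V(k))·χ_{I_L}(k). -/

import Mathlib

open MeasureTheory
open scoped RealInnerProductSpace

/-- The nearest lattice point `q_V(k)` of the momentum lattice `Γ_V`, defined
componentwise by `q_V(k)_j = (2π/V)·⌊V·k_j/(2π) + 1/2⌋`. -/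
noncomputable def qV (V : ℝ) (k : EuclideanSpace ℝ (Fin 3)) :
    EuclideanSpace ℝ (Fin 3) :=
  WithLp.toLp 2 fun j => (2 * Real.pi / V) * (⌊V * k j / (2 * Real.pi) + 1 / 2⌋ : ℤ)

/-- The cube `I_L = [−L,L]³ ⊂ ℝ³`. -/
def cubeI (L : ℝ) : Set (EuclideanSpace ℝ (Fin 3)) :=
  {k | ∀ j, k j ∈ Set.Icc (-L) L}

/-- The cutoff one-particle function `(h_x)_L(k) = h(k)·e^{i⟨k,x⟩}·χ_{I_L}(k)`. -/
noncomputable def hxL (h : EuclideanSpace ℝ (Fin 3) → ℂ) (L : ℝ)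
    (x : EuclideanSpace ℝ (Fin 3)) : EuclideanSpace ℝ (Fin 3) → ℂ :=
  (cubeI L).indicator fun k => h k * Complex.exp (Complex.I * (⟪k, x⟫ : ℝ))

/-- The lattice approximation
`(h_x)_{L,V}(k) = h(q_V(k))·e^{i⟨q_V(k),x⟩}·χ_{I_L}(k)`. -/
noncomputable def hxLV (h : EuclideanSpace ℝ (Fin 3) → ℂ) (L V : ℝ)
    (x : EuclideanSpace ℝ (Fin 3)) : EuclideanSpace ℝ (Fin 3) → ℂ :=
  (cubeI L).indicator fun k =>
    h (qV V k) * Complex.exp (Complex.I * (⟪qV V k, x⟫ : ℝ))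

section Aux

private lemma norm_exp_I_mul_sub (a b : ℝ) :
    ‖Complex.exp (Complex.I * a) - Complex.exp (Complex.I * b)‖ ≤ |a - b| := by
  have hderiv : ∀ t : ℝ, HasDerivAt (fun t : ℝ => Complex.exp (Complex.I * t))
      (Complex.exp (Complex.I * t) * Complex.I) t := by
    intro t
    have h1 : HasDerivAt (fun t : ℝ => (Complex.I * t : ℂ)) Complex.I t := by
      simpa using (Complex.ofRealCLM.hasDerivAt (x := t)).const_mul Complex.I
    exact h1.cexp
  have hlip : LipschitzWith 1 (fun t : ℝ => Complex.exp (Complex.I * t)) := by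
    apply lipschitzWith_of_nnnorm_deriv_le (fun t => (hderiv t).differentiableAt)
    intro t
    rw [(hderiv t).deriv]
    have : ‖Complex.exp (Complex.I * t) * Complex.I‖ = 1 := by
      simp [Complex.norm_exp]
    simp only [← NNReal.coe_le_coe, coe_nnnorm, this, NNReal.coe_one, le_refl]
  have := hlip.dist_le_mul a b
  simpa [dist_eq_norm, Real.dist_eq] using this

private lemma measurable_qV (V : ℝ) : Measurable (qV V) := by
  apply (WithLp.measurable_toLp 2 (Fin 3 → ℝ)).comp
  apply measurable_pi_iff.mpr
  intro j
  have h0 : Measurable fun k : EuclideanSpace ℝ (Fin 3) =>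
      V * k j / (2 * Real.pi) + 1 / 2 := by
    have hap : Measurable fun k : EuclideanSpace ℝ (Fin 3) => k j :=
      (measurable_pi_apply j).comp (WithLp.measurable_ofLp 2 _)
    exact ((hap.const_mul V).div_const _).add_const _
  exact measurable_const.mul (measurable_from_top.comp h0.floor)

private lemma measurableSet_cubeI (L : ℝ) : MeasurableSet (cubeI L) := by
  have : cubeI L = ⋂ j, (fun k : EuclideanSpace ℝ (Fin 3) => k j) ⁻¹' Set.Icc (-L) L := by
    ext k; simp [cubeI]
  rw [this]
  exact MeasurableSet.iInter fun j => ((measurable_pi_apply j).comp (WithLp.measurable_ofLp 2 _)) measurableSet_Icc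

private lemma norm_sub_qV_le {V : ℝ} (hV : 0 < V) (k : EuclideanSpace ℝ (Fin 3)) :
    ‖k - qV V k‖ ≤ Real.sqrt 3 * Real.pi / V := by
  have hpiV : 0 ≤ Real.pi / V := div_nonneg Real.pi_pos.le hV.le
  have hcomp : ∀ j, |k j - qV V k j| ≤ Real.pi / V := by
    intro j
    have h2pi : (0:ℝ) < 2 * Real.pi := by positivity
    set y : ℝ := V * k j / (2 * Real.pi) with hy
    have hkj : k j = (2 * Real.pi / V) * y := by
      rw [hy]; field_simp
    have : k j - qV V k j = (2 * Real.pi / V) * (y - round y) := by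
      rw [round_eq]
      show k j - (2 * Real.pi / V) * (⌊V * k j / (2 * Real.pi) + 1 / 2⌋ : ℤ) = _
      rw [← hy, hkj]; ring
    rw [this, abs_mul, abs_of_pos (by positivity : (0:ℝ) < 2 * Real.pi / V)]
    calc 2 * Real.pi / V * |y - round y| ≤ 2 * Real.pi / V * (1/2) :=
          mul_le_mul_of_nonneg_left (abs_sub_round y) (by positivity)
      _ = Real.pi / V := by ring
  have hnorm : ‖k - qV V k‖ = Real.sqrt (∑ j, ‖(k - qV V k) j‖ ^ 2) :=
    EuclideanSpace.norm_eq _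
  rw [hnorm]
  have hsum : (∑ j, ‖(k - qV V k) j‖ ^ 2) ≤ 3 * (Real.pi / V) ^ 2 := by
    have : ∀ j : Fin 3, ‖(k - qV V k) j‖ ^ 2 ≤ (Real.pi / V) ^ 2 := by
      intro j
      have h1 : ‖(k - qV V k) j‖ = |k j - qV V k j| := by
        simp [Real.norm_eq_abs]
      rw [h1]
      exact pow_le_pow_left₀ (abs_nonneg _) (hcomp j) 2
    calc (∑ j, ‖(k - qV V k) j‖ ^ 2) ≤ ∑ _j : Fin 3, (Real.pi / V) ^ 2 :=
          Finset.sum_le_sum fun j _ => this j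
      _ = 3 * (Real.pi / V) ^ 2 := by simp
  calc Real.sqrt (∑ j, ‖(k - qV V k) j‖ ^ 2) ≤ Real.sqrt (3 * (Real.pi / V) ^ 2) :=
        Real.sqrt_le_sqrt hsum
    _ = Real.sqrt 3 * (Real.pi / V) := by
        rw [Real.sqrt_mul (by norm_num), Real.sqrt_sq hpiV]
    _ = Real.sqrt 3 * Real.pi / V := by ring

end Aux

/-- For continuous `h`, `L > 0`, `V > 0`, `x ∈ ℝ³`:
`‖(h_x)_L − (h_x)_{L,V}‖₂ ≤ ‖h_L − h_{L,V}‖₂ + (√3·π/V)·‖x‖·‖h_{L,V}‖₂`. -/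
theorem eLpNorm_hxL_sub_hxLV_le (h : EuclideanSpace ℝ (Fin 3) → ℂ)
    (hh : Continuous h) (L V : ℝ) (hL : 0 < L) (hV : 0 < V)
    (x : EuclideanSpace ℝ (Fin 3)) :
    eLpNorm (hxL h L x - hxLV h L V x) 2 volume ≤
      eLpNorm ((cubeI L).indicator h - (cubeI L).indicator fun k => h (qV V k)) 2
          volume +
        ENNReal.ofReal (Real.sqrt 3 * Real.pi / V * ‖x‖) *
          eLpNorm ((cubeI L).indicator fun k => h (qV V k)) 2 volume := by
  set c : ℝ := Real.sqrt 3 * Real.pi / V * ‖x‖ with hc_def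
  have hc0 : 0 ≤ c := by positivity
  set f1 : EuclideanSpace ℝ (Fin 3) → ℂ :=
    (cubeI L).indicator fun k =>
      (h k - h (qV V k)) * Complex.exp (Complex.I * (⟪k, x⟫ : ℝ)) with hf1
  set f2 : EuclideanSpace ℝ (Fin 3) → ℂ :=
    (cubeI L).indicator fun k =>
      h (qV V k) * (Complex.exp (Complex.I * (⟪k, x⟫ : ℝ)) -
        Complex.exp (Complex.I * (⟪qV V k, x⟫ : ℝ))) with hf2
  -- decompose
  have heq : hxL h L x - hxLV h L V x = f1 + f2 := by
    funext k
    by_cases hk : k ∈ cubeI L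
    · simp only [Pi.sub_apply, Pi.add_apply, hxL, hxLV, hf1, hf2,
        Set.indicator_of_mem hk]
      ring
    · simp [hxL, hxLV, hf1, hf2, Set.indicator_of_notMem hk]
  -- measurability
  have hmS := measurableSet_cubeI L
  have mq := measurable_qV V
  have minner : Measurable fun k : EuclideanSpace ℝ (Fin 3) => (⟪k, x⟫ : ℝ) :=
    (continuous_id.inner continuous_const).measurable
  have minner2 : Measurable fun k : EuclideanSpace ℝ (Fin 3) => (⟪qV V k, x⟫ : ℝ) :=
    minner.comp mq
  have mexp1 : Measurable fun k : EuclideanSpace ℝ (Fin 3) =>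
      Complex.exp (Complex.I * (⟪k, x⟫ : ℝ)) :=
    Complex.continuous_exp.measurable.comp
      (measurable_const.mul (Complex.measurable_ofReal.comp minner))
  have mexp2 : Measurable fun k : EuclideanSpace ℝ (Fin 3) =>
      Complex.exp (Complex.I * (⟪qV V k, x⟫ : ℝ)) :=
    Complex.continuous_exp.measurable.comp
      (measurable_const.mul (Complex.measurable_ofReal.comp minner2))
  have mh := hh.measurable
  have m1 : AEStronglyMeasurable f1 volume :=
    (((mh.sub (mh.comp mq)).mul mexp1).indicator hmS).aestronglyMeasurable
  have m2 : AEStronglyMeasurable f2 volume :=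
    (((mh.comp mq).mul (mexp1.sub mexp2)).indicator hmS).aestronglyMeasurable
  -- norm of unit phases
  have hexp : ∀ r : ℝ, ‖Complex.exp (Complex.I * r)‖ = 1 := by
    intro r; simp [Complex.norm_exp]
  -- step A
  have stepA : eLpNorm f1 2 volume =
      eLpNorm ((cubeI L).indicator h - (cubeI L).indicator fun k => h (qV V k)) 2
        volume := by
    have hnormeq : ∀ k, ‖f1 k‖ =
        ‖((cubeI L).indicator h - (cubeI L).indicator fun k => h (qV V k)) k‖ := by
      intro k
      by_cases hk : k ∈ cubeI L
      · simp only [hf1, Pi.sub_apply, Set.indicator_of_mem hk, norm_mul, hexp,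
          mul_one]
      · simp [hf1, Set.indicator_of_notMem hk]
    exact le_antisymm (eLpNorm_mono fun k => (hnormeq k).le)
      (eLpNorm_mono fun k => (hnormeq k).ge)
  -- step B
  have stepB : eLpNorm f2 2 volume ≤
      ENNReal.ofReal c *
        eLpNorm ((cubeI L).indicator fun k => h (qV V k)) 2 volume := by
    have hbound : ∀ k, ‖f2 k‖ ≤
        ‖(c • (cubeI L).indicator fun k => h (qV V k)) k‖ := by
      intro k
      by_cases hk : k ∈ cubeI L
      · have hbd : ‖Complex.exp (Complex.I * (⟪k, x⟫ : ℝ)) -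
              Complex.exp (Complex.I * (⟪qV V k, x⟫ : ℝ))‖ ≤ c := by
          rw [hc_def]
          calc ‖Complex.exp (Complex.I * (⟪k, x⟫ : ℝ)) -
                Complex.exp (Complex.I * (⟪qV V k, x⟫ : ℝ))‖
              ≤ |(⟪k, x⟫ : ℝ) - (⟪qV V k, x⟫ : ℝ)| := norm_exp_I_mul_sub _ _
            _ = |(⟪k - qV V k, x⟫ : ℝ)| := by rw [inner_sub_left]
            _ ≤ ‖k - qV V k‖ * ‖x‖ := abs_real_inner_le_norm _ _
            _ ≤ Real.sqrt 3 * Real.pi / V * ‖x‖ :=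
                mul_le_mul_of_nonneg_right (norm_sub_qV_le hV k) (norm_nonneg x)
        calc ‖f2 k‖
            = ‖h (qV V k)‖ * ‖Complex.exp (Complex.I * (⟪k, x⟫ : ℝ)) -
                Complex.exp (Complex.I * (⟪qV V k, x⟫ : ℝ))‖ := by
              rw [hf2, Set.indicator_of_mem hk, norm_mul]
          _ ≤ ‖h (qV V k)‖ * c := mul_le_mul_of_nonneg_left hbd (norm_nonneg _)
          _ = c * ‖h (qV V k)‖ := mul_comm _ _
          _ = ‖(c • (cubeI L).indicator fun k => h (qV V k)) k‖ := by
              rw [Pi.smul_apply, Set.indicator_of_mem hk, norm_smul,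
                Real.norm_eq_abs, abs_of_nonneg hc0]
      · simp [hf2, Set.indicator_of_notMem hk]
    calc eLpNorm f2 2 volume
        ≤ eLpNorm (c • (cubeI L).indicator fun k => h (qV V k)) 2 volume :=
          eLpNorm_mono hbound
      _ = (‖c‖₊ : ENNReal) *
          eLpNorm ((cubeI L).indicator fun k => h (qV V k)) 2 volume :=
          eLpNorm_const_smul c _ 2 volume
      _ = ENNReal.ofReal c *
          eLpNorm ((cubeI L).indicator fun k => h (qV V k)) 2 volume := by
          rw [← enorm_eq_nnnorm, Real.enorm_eq_ofReal hc0]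
  calc eLpNorm (hxL h L x - hxLV h L V x) 2 volume
      = eLpNorm (f1 + f2) 2 volume := by rw [heq]
    _ ≤ eLpNorm f1 2 volume + eLpNorm f2 2 volume :=
        eLpNorm_add_le m1 m2 one_le_two
    _ ≤ _ := add_le_add stepA.le stepB
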